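/- Let σ = ±1, let ν ∈ ℝ with ν ≠ 0, and let u, v : U → ℝ be smooth functions on an open set U ⊆ ℝ² satisfying u_{xt} = u·u_x·v_x, v_{xt} = −u(v_x² + 1) on U. Define F₁₁ = σ·u_x/ν, F₁₂ = 0, F₂₁ = u_x·v_x/ν, F₂₂ = ν, F₃₁ = 0, F₃₂ = σ·u. Then on U the structure equations with δ = 1 hold: −∂_t F₁₁ + ∂_x F₁₂ = F₃₁F₂₂ − F₃₂F₂₁, −∂_t F₂₁ + ∂_x F₂₂ = F₁₁F₃₂ − F₁₂F₃₁, −∂_t F₃₁ + ∂_x F₃₂ = F₁₁F₂₂ − F₁₂F₂₁; hence this system describes pseudospherical surfaces with these associated functions. -/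

import Mathlib

open Real

/-- Partial derivative in the `x` direction of a function on the `(x, t)` plane. -/
noncomputable def pdx (f : ℝ × ℝ → ℝ) (p : ℝ × ℝ) : ℝ := fderiv ℝ f p (1, 0)

/-- Partial derivative in the `t` direction of a function on the `(x, t)` plane. -/
noncomputable def pdt (f : ℝ × ℝ → ℝ) (p : ℝ × ℝ) : ℝ := fderiv ℝ f p (0, 1)

/-- The structure equations of a surface of constant Gaussian curvature `-δ`. -/
def StructEqs (δ : ℝ) (U : Set (ℝ × ℝ)) (F11 F12 F21 F22 F31 F32 : ℝ × ℝ → ℝ) : Prop :=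
  ∀ p ∈ U,
    -(pdt F11 p) + pdx F12 p = F31 p * F22 p - F32 p * F21 p ∧
    -(pdt F21 p) + pdx F22 p = F11 p * F32 p - F12 p * F31 p ∧
    -(pdt F31 p) + pdx F32 p = δ * (F11 p * F22 p - F12 p * F21 p)

lemma pdx_diffAt {f : ℝ × ℝ → ℝ} {p : ℝ × ℝ} (hf : ContDiffAt ℝ (⊤ : ℕ∞) f p) :
    DifferentiableAt ℝ (pdx f) p := by
  have h1 : ContDiffAt ℝ (⊤ : ℕ∞) (fderiv ℝ f) p := hf.fderiv_right (by exact_mod_cast le_top)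
  have h2 : ContDiffAt ℝ (⊤ : ℕ∞) (fun q => fderiv ℝ f q (1, 0)) p :=
    h1.clm_apply contDiffAt_const
  exact h2.differentiableAt (by simp)


/-- The system `u_xt = u u_x v_x`, `v_xt = −u(v_x² + 1)` describes pseudospherical surfaces. -/
theorem system_cincoparametrosKODISex1_describes_pss (σ ν : ℝ)
    (hσ : σ = 1 ∨ σ = -1) (hν : ν ≠ 0)
    (U : Set (ℝ × ℝ)) (hU : IsOpen U)
    (u v : ℝ × ℝ → ℝ)
    (hu : ContDiffOn ℝ (⊤ : ℕ∞) u U) (hv : ContDiffOn ℝ (⊤ : ℕ∞) v U)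
    (heq1 : ∀ p ∈ U, pdt (pdx u) p = u p * pdx u p * pdx v p)
    (heq2 : ∀ p ∈ U, pdt (pdx v) p = -(u p) * (pdx v p ^ 2 + 1)) :
    StructEqs 1 U
      (fun q => σ * pdx u q / ν)
      (fun _ => 0)
      (fun q => pdx u q * pdx v q / ν)
      (fun _ => ν)
      (fun _ => 0)
      (fun q => σ * u q) := by
  intro p hp
  have hpu : ContDiffAt ℝ (⊤ : ℕ∞) u p := hu.contDiffAt (hU.mem_nhds hp)
  have hpv : ContDiffAt ℝ (⊤ : ℕ∞) v p := hv.contDiffAt (hU.mem_nhds hp)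
  have hdu : DifferentiableAt ℝ (pdx u) p := pdx_diffAt hpu
  have hdv : DifferentiableAt ℝ (pdx v) p := pdx_diffAt hpv
  have hσ2 : σ * σ = 1 := by rcases hσ with h | h <;> rw [h] <;> ring
  -- constants
  have hconst : ∀ c : ℝ, (pdt (fun _ : ℝ × ℝ => c) p = 0 ∧ pdx (fun _ : ℝ × ℝ => c) p = 0) := by
    intro c
    constructor <;> simp [pdt, pdx, fderiv_const]
  -- pdt F11
  have h11 : pdt (fun q => σ * pdx u q / ν) p = σ / ν * pdt (pdx u) p := by
    have he : (fun q => σ * pdx u q / ν) = fun q => (σ / ν) * pdx u q := by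
      funext q; ring
    rw [he]
    unfold pdt
    rw [fderiv_const_mul hdu]
    simp
  -- pdt F21
  have h21 : pdt (fun q => pdx u q * pdx v q / ν) p =
      (1 / ν) * (pdx u p * pdt (pdx v) p + pdx v p * pdt (pdx u) p) := by
    have he : (fun q => pdx u q * pdx v q / ν) = fun q => (1 / ν) * (pdx u q * pdx v q) := by
      funext q; ring
    rw [he]
    unfold pdt
    rw [show (fun q => 1 / ν * (pdx u q * pdx v q)) = fun q => 1 / ν * (pdx u * pdx v) q from rfl]
    rw [fderiv_const_mul (hdu.mul hdv), fderiv_mul hdu hdv]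
    simp [pdt]
    ring
  -- pdx F32
  have h32 : pdx (fun q => σ * u q) p = σ * pdx u p := by
    unfold pdx
    rw [fderiv_const_mul (hpu.differentiableAt (by simp))]
    simp
  refine ⟨?_, ?_, ?_⟩
  · rw [h11, (hconst 0).2, heq1 p hp]
    ring
  · rw [h21, (hconst ν).2, heq1 p hp, heq2 p hp]
    linear_combination (-(pdx u p * u p / ν)) * hσ2
  · rw [(hconst 0).1, h32]
    field_simp
    ring
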